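/- For every nonnegative integer j, the functions φ_j(s) := (−1)^j·γ(s)·∑_{k=0}^∞ ((2j−1)!!/(2k+2j+1)!!)·s^{2k+1} satisfy d/ds (φ_j(s)/s) = φ_{j+1}(s), where (−1)!! = 1 by convention. -/

import Mathlib

noncomputable def gauss (s : ℝ) : ℝ := (Real.sqrt (2 * Real.pi))⁻¹ * Real.exp (-s ^ 2 / 2)

/-- φ_j(s) = (−1)^j γ(s) ∑_k ((2j−1)!!/(2k+2j+1)!!) s^{2k+1}.
Note `2*j-1` uses truncated `ℕ` subtraction, so for `j = 0` it is `0‼ = 1`,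
matching the convention `(−1)!! = 1`. -/
noncomputable def phij (j : ℕ) (s : ℝ) : ℝ :=
  (-1) ^ j * gauss s *
    ∑' k : ℕ, (Nat.doubleFactorial (2 * j - 1) : ℝ) /
      (Nat.doubleFactorial (2 * k + 2 * j + 1) : ℝ) * s ^ (2 * k + 1)

/-- The power-series version of φ_j(s)/s, well defined at `s = 0`. -/
noncomputable def phijDiv (j : ℕ) (s : ℝ) : ℝ :=
  (-1) ^ j * gauss s *
    ∑' k : ℕ, (Nat.doubleFactorial (2 * j - 1) : ℝ) /
      (Nat.doubleFactorial (2 * k + 2 * j + 1) : ℝ) * s ^ (2 * k)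

open Nat

lemma dfac_le_succ : ∀ n : ℕ, n‼ ≤ (n+1)‼
  | 0 => le_refl 1
  | 1 => by norm_num [Nat.doubleFactorial]
  | (n+2) => by
      rw [Nat.doubleFactorial_add_two, show n+2+1 = (n+1)+2 by ring,
        Nat.doubleFactorial_add_two]
      exact Nat.mul_le_mul (by omega) (dfac_le_succ n)

lemma dfac_mono : Monotone Nat.doubleFactorial := monotone_nat_of_le_succ dfac_le_succ

lemma pow_fact_le (j k : ℕ) : (2^k * k.factorial : ℕ) ≤ (2*k+2*j+1)‼ := by
  calc 2^k * k.factorial = (2*k)‼ := (Nat.doubleFactorial_two_mul k).symm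
  _ ≤ (2*k+2*j+1)‼ := dfac_mono (by omega)

lemma dfac_succ_j (j : ℕ) : ((2*(j+1)-1)‼ : ℕ) = (2*j+1) * (2*j-1)‼ := by
  cases j with
  | zero => norm_num [Nat.doubleFactorial]
  | succ j =>
      rw [show 2*(j+1+1)-1 = (2*(j+1)-1)+2 by omega, Nat.doubleFactorial_add_two,
        show 2*(j+1)-1+2 = 2*(j+1)+1 by omega]

noncomputable def aco (j k : ℕ) : ℝ :=
  (Nat.doubleFactorial (2 * j - 1) : ℝ) / (Nat.doubleFactorial (2 * k + 2 * j + 1) : ℝ)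

lemma aco_nonneg (j k : ℕ) : 0 ≤ aco j k := by
  unfold aco; positivity

lemma coeff_id (j k : ℕ) :
    aco j k - (2*(k:ℝ)+2) * aco j (k+1) = aco (j+1) k := by
  unfold aco
  rw [show 2*(k+1)+2*j+1 = (2*k+2*j+1)+2 by omega,
    show 2*k+2*(j+1)+1 = (2*k+2*j+1)+2 by omega,
    Nat.doubleFactorial_add_two, dfac_succ_j]
  have hN : (0:ℝ) < ((2*k+2*j+1)‼ : ℕ) := by exact_mod_cast Nat.doubleFactorial_pos _
  have hM : (0:ℝ) < ((2*k+2*j+1)+2 : ℕ) := by positivity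
  field_simp
  push_cast
  ring

set_option maxHeartbeats 1000000 in
lemma summable_u (j : ℕ) (R : ℝ) (hR : 1 ≤ R) :
    Summable (fun k : ℕ => aco j k * ((2*(k:ℝ)+2) * R^(2*k+1))) := by
  have hR0 : (0:ℝ) < R := lt_of_lt_of_le one_pos hR
  set c : ℝ := (Nat.doubleFactorial (2*j-1) : ℝ) with hc
  have hc0 : 0 ≤ c := by positivity
  apply Summable.of_nonneg_of_le (f := fun k => (2*c*R) * ((R^2)^k / (k.factorial : ℝ)))
  · intro k
    have := aco_nonneg j k
    positivity
  · intro k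
    have hfac : (0:ℝ) < (2:ℝ)^k * (k.factorial : ℝ) := by positivity
    have hle : ((2:ℝ)^k * (k.factorial : ℝ)) ≤ ((2*k+2*j+1)‼ : ℕ) := by
      exact_mod_cast pow_fact_le j k
    have h1 : aco j k ≤ c / ((2:ℝ)^k * (k.factorial : ℝ)) := by
      unfold aco
      rw [← hc]
      exact div_le_div_of_nonneg_left hc0 hfac hle
    have h2 : (2*(k:ℝ)+2) ≤ 2^(k+1) := by
      have : k < 2^k := Nat.lt_two_pow_self
      have : (2*k+2 : ℕ) ≤ 2^(k+1) := by
        rw [pow_succ]; omega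
      exact_mod_cast this
    calc aco j k * ((2*(k:ℝ)+2) * R^(2*k+1))
        ≤ (c / ((2:ℝ)^k * (k.factorial : ℝ))) * ((2:ℝ)^(k+1) * R^(2*k+1)) := by
          apply mul_le_mul h1 (mul_le_mul_of_nonneg_right h2 (by positivity)) (by positivity)
            (by positivity)
      _ = (2*c*R) * ((R^2)^k / (k.factorial : ℝ)) := by
          rw [pow_succ R, pow_mul]
          have hk : ((k.factorial : ℝ)) ≠ 0 := by positivity
          field_simp
          ring
  · exact (Real.summable_pow_div_factorial (R^2)).mul_left _

lemma gauss_deriv (s : ℝ) : HasDerivAt gauss (-s * gauss s) s := by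
  have h1 : HasDerivAt (fun z : ℝ => -z^2/2) (-s) s := by
    have := ((hasDerivAt_pow 2 s).neg).div_const 2
    refine this.congr_deriv ?_
    norm_num
    ring
  have h2 := (h1.exp).const_mul (Real.sqrt (2 * Real.pi))⁻¹
  refine h2.congr_deriv ?_
  unfold gauss; ring

theorem stmt12 (j : ℕ) (s : ℝ) : HasDerivAt (phijDiv j) (phij (j + 1) s) s := by
  set R : ℝ := |s| + 1 with hRdef
  have habs : (0:ℝ) ≤ |s| := abs_nonneg s
  have hR1 : 1 ≤ R := by rw [hRdef]; linarith
  have hR0 : (0:ℝ) < R := lt_of_lt_of_le one_pos hR1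
  have hsR : |s| < R := by rw [hRdef]; linarith
  have hs_mem : s ∈ Metric.ball (0:ℝ) R := by
    simp [Metric.mem_ball, Real.dist_eq, hsR]
  set u : ℕ → ℝ := fun k => aco j k * ((2*(k:ℝ)+2) * R^(2*k+1)) with hudef
  have hu : Summable u := summable_u j R hR1
  -- pointwise derivative of the terms
  have hg : ∀ (k : ℕ) (y : ℝ), y ∈ Metric.ball (0:ℝ) R →
      HasDerivAt (fun z : ℝ => aco j k * z^(2*k)) (aco j k * (((2*k : ℕ):ℝ) * y^(2*k-1))) y :=
    fun k y _ => (hasDerivAt_pow (2*k) y).const_mul _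
  -- bound on the derivatives
  have hg' : ∀ (k : ℕ) (y : ℝ), y ∈ Metric.ball (0:ℝ) R →
      ‖aco j k * (((2*k : ℕ):ℝ) * y^(2*k-1))‖ ≤ u k := by
    intro k y hy
    have hy' : |y| ≤ R := by
      have : dist y 0 < R := Metric.mem_ball.1 hy
      rw [Real.dist_eq, sub_zero] at this
      exact this.le
    have hpow : |y|^(2*k-1) ≤ R^(2*k+1) :=
      le_trans (pow_le_pow_left₀ (abs_nonneg y) hy' _) (pow_le_pow_right₀ hR1 (by omega))
    calc ‖aco j k * (((2*k : ℕ):ℝ) * y^(2*k-1))‖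
        = aco j k * (((2*k : ℕ):ℝ) * |y|^(2*k-1)) := by
          rw [Real.norm_eq_abs, abs_mul, abs_mul, abs_pow,
            abs_of_nonneg (aco_nonneg j k), Nat.abs_cast]
      _ ≤ aco j k * ((2*(k:ℝ)+2) * R^(2*k+1)) := by
          refine mul_le_mul_of_nonneg_left ?_ (aco_nonneg j k)
          refine mul_le_mul (by push_cast; linarith) hpow (by positivity) (by positivity)
  -- summability of the series at s
  have hsumS : Summable (fun k : ℕ => aco j k * s^(2*k)) := by
    apply Summable.of_norm_bounded hu
    intro k
    have hpow : |s|^(2*k) ≤ R^(2*k+1) :=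
      le_trans (pow_le_pow_left₀ (abs_nonneg s) hsR.le _) (pow_le_pow_right₀ hR1 (by omega))
    calc ‖aco j k * s^(2*k)‖ = aco j k * |s|^(2*k) := by
          rw [Real.norm_eq_abs, abs_mul, abs_pow, abs_of_nonneg (aco_nonneg j k)]
      _ ≤ aco j k * ((2*(k:ℝ)+2) * R^(2*k+1)) := by
          refine mul_le_mul_of_nonneg_left ?_ (aco_nonneg j k)
          calc |s|^(2*k) ≤ R^(2*k+1) := hpow
            _ ≤ (2*(k:ℝ)+2) * R^(2*k+1) := by
                refine le_mul_of_one_le_left (by positivity) ?_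
                have : (0:ℝ) ≤ (k:ℝ) := Nat.cast_nonneg k
                linarith
  -- derivative of the tsum
  have hS : HasDerivAt (fun z : ℝ => ∑' k : ℕ, aco j k * z^(2*k))
      (∑' k : ℕ, aco j k * (((2*k : ℕ):ℝ) * s^(2*k-1))) s :=
    hasDerivAt_tsum_of_isPreconnected hu Metric.isOpen_ball
      (convex_ball (0:ℝ) R).isPreconnected hg hg' hs_mem hsumS hs_mem
  set S : ℝ := ∑' k : ℕ, aco j k * s^(2*k) with hSdef
  set D : ℝ := ∑' k : ℕ, aco j k * (((2*k : ℕ):ℝ) * s^(2*k-1)) with hDdef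
  -- summability facts for the algebraic manipulation
  have hsumD : Summable (fun k : ℕ => aco j k * (((2*k : ℕ):ℝ) * s^(2*k-1))) :=
    Summable.of_norm_bounded hu (fun k => hg' k s hs_mem)
  have hsum1 : Summable (fun k : ℕ => aco j k * s^(2*k+1)) := by
    apply Summable.of_norm_bounded hu
    intro k
    have hpow : |s|^(2*k+1) ≤ R^(2*k+1) := pow_le_pow_left₀ (abs_nonneg s) hsR.le _
    calc ‖aco j k * s^(2*k+1)‖ = aco j k * |s|^(2*k+1) := by
          rw [Real.norm_eq_abs, abs_mul, abs_pow, abs_of_nonneg (aco_nonneg j k)]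
      _ ≤ aco j k * ((2*(k:ℝ)+2) * R^(2*k+1)) := by
          refine mul_le_mul_of_nonneg_left ?_ (aco_nonneg j k)
          calc |s|^(2*k+1) ≤ R^(2*k+1) := hpow
            _ ≤ (2*(k:ℝ)+2) * R^(2*k+1) := by
                refine le_mul_of_one_le_left (by positivity) ?_
                have : (0:ℝ) ≤ (k:ℝ) := Nat.cast_nonneg k
                linarith
  have hshift_eq : ∀ k : ℕ, aco j (k+1) * (((2*(k+1) : ℕ):ℝ) * s^(2*(k+1)-1))
      = aco j (k+1) * ((2*(k:ℝ)+2) * s^(2*k+1)) := by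
    intro k
    rw [show 2*(k+1)-1 = 2*k+1 by omega]
    push_cast
    ring
  have hsum2 : Summable (fun k : ℕ => aco j (k+1) * ((2*(k:ℝ)+2) * s^(2*k+1))) := by
    have := (summable_nat_add_iff 1).2 hsumD
    exact this.congr hshift_eq
  -- key identity : s*S - D = the (j+1) series
  have hD_shift : D = ∑' k : ℕ, aco j (k+1) * ((2*(k:ℝ)+2) * s^(2*k+1)) := by
    have h0 : aco j 0 * (((2*0 : ℕ):ℝ) * s^(2*0-1)) = 0 := by norm_num
    rw [hDdef, hsumD.tsum_eq_zero_add, h0, zero_add]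
    exact tsum_congr hshift_eq
  have hkey : s * S - D = ∑' k : ℕ, aco (j+1) k * s^(2*k+1) := by
    rw [hSdef, ← tsum_mul_left, hD_shift,
      ← Summable.tsum_sub (hsum1.congr (fun k => by ring)) hsum2]
    refine tsum_congr (fun k => ?_)
    rw [← coeff_id j k]
    ring
  -- assemble
  have hfun : phijDiv j = fun z : ℝ => (-1:ℝ)^j * (gauss z * ∑' k : ℕ, aco j k * z^(2*k)) := by
    funext z
    simp only [phijDiv, aco]
    ring
  have h2 := ((gauss_deriv s).mul hS).const_mul ((-1:ℝ)^j)
  rw [hfun]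
  refine h2.congr_deriv ?_
  have hphi : phij (j+1) s = (-1:ℝ)^(j+1) * gauss s * (s * S - D) := by
    rw [hkey]
    simp only [phij, aco]
  rw [hphi]
  ring
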